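/- Let h_1, …, h_n ∈ ℝ^d be pairwise distinct node representations and let φ : {1,…,n} → {1,…,n} be any mapping. Then there exist a hidden dimension d' ∈ ℕ, a weight matrix W ∈ ℝ^{d'×2d}, a bias vector b ∈ ℝ^{d'}, and a vector a ∈ ℝ^{d'} such that the GATv2 scoring function e(h_i, h_j) = aᵀ · LeakyReLU_c(W·[h_i ‖ h_j] + b) satisfies, for every i ∈ {1,…,n} and every j ∈ {1,…,n} with j ≠ φ(i), e(h_i, h_{φ(i)}) > e(h_i, h_j). That is, the GATv2 family of scoring functions computes dynamic attention for any set of pairwise distinct node representations (Theorem 2). -/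

import Mathlib

open Matrix

/-- LeakyReLU with slope `c`. -/
noncomputable def leakyReLU (c x : ℝ) : ℝ := max x (c * x)

/-- The GATv2 scoring function `e(q,k) = aᵀ · LeakyReLU_c(W·[q ‖ k] + b)`. -/
noncomputable def gatv2Score {d d' : ℕ} (c : ℝ) (W : Matrix (Fin d') (Fin (d + d)) ℝ)
    (b a : Fin d' → ℝ) (q k : Fin d → ℝ) : ℝ :=
  a ⬝ᵥ fun r => leakyReLU c (W.mulVec (Fin.append q k) r + b r)

/-! ### Auxiliary definitions and lemmas -/

/-- The ReLU function. -/
noncomputable def myRelu (x : ℝ) : ℝ := max x 0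

/-- A triangular "tent" bump of half-width `δ` centered at `s`. -/
noncomputable def tent (δ s x : ℝ) : ℝ :=
  (myRelu (x - s + δ) - 2 * myRelu (x - s) + myRelu (x - s - δ)) / δ

lemma leaky_pair (c : ℝ) (hc0 : 0 < c) (hc1 : c < 1) (y : ℝ) :
    leakyReLU c y + c * leakyReLU c (-y) = (1 - c^2) * myRelu y := by
  unfold leakyReLU myRelu
  rcases le_or_gt 0 y with hy | hy
  · rw [max_eq_left (by nlinarith), max_eq_right (by nlinarith), max_eq_left hy]
    ring
  · rw [max_eq_right (by nlinarith), max_eq_left (by nlinarith), max_eq_right hy.le]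
    ring

lemma tent_self (δ s : ℝ) (hδ : 0 < δ) : tent δ s s = 1 := by
  unfold tent myRelu
  rw [show s - s + δ = δ by ring, show s - s = 0 by ring, show (0:ℝ) - δ = -δ by ring,
    max_eq_left hδ.le, max_self, max_eq_right (by linarith)]
  field_simp
  ring

lemma tent_nonneg (δ s x : ℝ) (hδ : 0 < δ) : 0 ≤ tent δ s x := by
  unfold tent myRelu
  rcases le_or_gt 0 (x - s) with hu | hu
  · rw [max_eq_left (by linarith), max_eq_left hu]
    have h1 : x - s - δ ≤ max (x - s - δ) 0 := le_max_left _ _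
    have := div_nonneg (a := (x - s + δ) - 2*(x-s) + max (x-s-δ) 0) ?_ hδ.le
    · linarith [this]
    · have := le_max_right (x - s - δ) (0:ℝ); linarith
  · rw [max_eq_right hu.le]
    have h1 : (0:ℝ) ≤ max (x - s + δ) 0 := le_max_right _ _
    have h2 : (0:ℝ) ≤ max (x - s - δ) 0 := le_max_right _ _
    have : (0:ℝ) ≤ max (x - s + δ) 0 - 2*0 + max (x - s - δ) 0 := by linarith
    exact div_nonneg (by linarith) hδ.le

lemma tent_far (δ s x : ℝ) (hδ : 0 < δ) (hfar : δ ≤ |x - s|) : tent δ s x = 0 := by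
  unfold tent myRelu
  rcases le_or_gt 0 (x - s) with hu | hu
  · have hx : δ ≤ x - s := by rwa [abs_of_nonneg hu] at hfar
    rw [max_eq_left (by linarith), max_eq_left (by linarith), max_eq_left (by linarith)]
    field_simp; ring
  · have hx : x - s ≤ -δ := by rw [abs_of_neg hu] at hfar; linarith
    rw [max_eq_right (by linarith), max_eq_right (by linarith), max_eq_right (by linarith)]
    simp

lemma unit_sum (c : ℝ) (hc0 : 0 < c) (hc1 : c < 1) (δ s x : ℝ) (hδ : 0 < δ) :
    ∑ t : Fin 6, (![(1:ℝ), c, -2, -2*c, 1, c] t / (δ*(1-c^2))) *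
      leakyReLU c (![(1:ℝ),-1,1,-1,1,-1] t * x + ![δ - s, s - δ, -s, s, -δ - s, s + δ] t)
    = tent δ s x := by
  rw [Fin.sum_univ_six]
  simp only [Matrix.cons_val_zero, Matrix.cons_val_one, Matrix.head_cons,
    Matrix.cons_val_two, Matrix.tail_cons, Matrix.cons_val_three,
    Matrix.cons_val_four, Matrix.cons_val_succ]
  have v5 : ∀ (a b c' d e f : ℝ), ![a,b,c',d,e,f] (5 : Fin 6) = f := fun _ _ _ _ _ _ => rfl
  rw [v5, v5, v5]
  have e1 : (1:ℝ) * x + (δ - s) = x - s + δ := by ring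
  have e2 : (-1:ℝ) * x + (s - δ) = -(x - s + δ) := by ring
  have e3 : (1:ℝ) * x + -s = x - s := by ring
  have e4 : (-1:ℝ) * x + s = -(x - s) := by ring
  have e5 : (1:ℝ) * x + (-δ - s) = x - s - δ := by ring
  have e6 : (-1:ℝ) * x + (s + δ) = -(x - s - δ) := by ring
  rw [e1, e2, e3, e4, e5, e6]
  have p1 := leaky_pair c hc0 hc1 (x - s + δ)
  have p2 := leaky_pair c hc0 hc1 (x - s)
  have p3 := leaky_pair c hc0 hc1 (x - s - δ)
  have h1 : (1:ℝ) - c^2 ≠ 0 := by nlinarith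
  have h1pos : (0:ℝ) < 1 - c^2 := by nlinarith
  trans (((leakyReLU c (x - s + δ) + c * leakyReLU c (-(x - s + δ)))
      - 2*(leakyReLU c (x - s) + c * leakyReLU c (-(x - s)))
      + (leakyReLU c (x - s - δ) + c * leakyReLU c (-(x - s - δ))))/(δ*(1-c^2)))
  · ring
  rw [p1, p2, p3]
  unfold tent
  generalize myRelu (x - s + δ) = M1
  generalize myRelu (x - s) = M2
  generalize myRelu (x - s - δ) = M3
  rw [div_eq_div_iff (by positivity) hδ.ne']
  ring

lemma exists_sep (m : ℕ) (S : Finset (Fin m → ℝ)) (hS : ∀ w ∈ S, w ≠ 0) :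
    ∃ v : Fin m → ℝ, ∀ w ∈ S, v ⬝ᵥ w ≠ 0 := by
  classical
  induction S using Finset.induction_on with
  | empty => exact ⟨0, fun w hw => absurd hw (Finset.notMem_empty w)⟩
  | @insert w₀ S hw₀S ih =>
    obtain ⟨v, hv⟩ := ih (fun w hw => hS w (Finset.mem_insert_of_mem hw))
    have hw₀ : w₀ ≠ 0 := hS w₀ (Finset.mem_insert_self _ _)
    set T : Finset ℝ := (insert w₀ S).image (fun w => -(v ⬝ᵥ w) / (w₀ ⬝ᵥ w)) with hT
    obtain ⟨t, ht⟩ := Infinite.exists_notMem_finset T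
    refine ⟨v + t • w₀, fun w hw => ?_⟩
    rw [add_dotProduct, smul_dotProduct, smul_eq_mul]
    rcases eq_or_ne (w₀ ⬝ᵥ w) 0 with h0 | h0
    · rw [h0, mul_zero, add_zero]
      rcases Finset.mem_insert.mp hw with rfl | hw
      · exact absurd (dotProduct_self_eq_zero.mp h0) hw₀
      · exact hv w hw
    · intro hc
      apply ht
      rw [hT]
      refine Finset.mem_image.mpr ⟨w, hw, ?_⟩
      field_simp
      linarith [hc]

lemma gat_repr {d n : ℕ} (c : ℝ) (v : Fin (d+d) → ℝ) (wt cf : Fin 6 → ℝ)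
    (bv : Fin n → Fin 6 → ℝ) (q k : Fin d → ℝ) :
    gatv2Score c (fun r : Fin (6*n) => wt (finProdFinEquiv.symm r).1 • v)
      (fun r => bv (finProdFinEquiv.symm r).2 (finProdFinEquiv.symm r).1)
      (fun r => cf (finProdFinEquiv.symm r).1) q k
    = ∑ i : Fin n, ∑ t : Fin 6,
        cf t * leakyReLU c (wt t * (v ⬝ᵥ Fin.append q k) + bv i t) := by
  unfold gatv2Score
  rw [dotProduct]
  rw [← Equiv.sum_comp (finProdFinEquiv : Fin 6 × Fin n ≃ Fin (6*n))]
  rw [Fintype.sum_prod_type, Finset.sum_comm]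
  refine Finset.sum_congr rfl fun i _ => Finset.sum_congr rfl fun t _ => ?_
  simp only [Equiv.symm_apply_apply]
  congr 1
  congr 1
  simp [Matrix.mulVec, smul_dotProduct, smul_eq_mul, dotProduct,
    Finset.mul_sum]
  exact Finset.sum_congr rfl fun x _ => by ring

/-- Theorem 2 (dynamic attention): for pairwise distinct node representations and any
mapping `φ`, some choice of GATv2 parameters makes `φ(i)` the strictly
highest-scoring key for every query `i`. -/
theorem gatv2_dynamic_attention {d n : ℕ}
    (c : ℝ) (hc0 : 0 < c) (hc1 : c < 1)
    (h : Fin n → Fin d → ℝ) (hdist : Function.Injective h)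
    (φ : Fin n → Fin n) :
    ∃ (d' : ℕ) (W : Matrix (Fin d') (Fin (d + d)) ℝ) (b a : Fin d' → ℝ),
      ∀ i j : Fin n, j ≠ φ i →
        gatv2Score c W b a (h i) (h (φ i)) > gatv2Score c W b a (h i) (h j) := by
  classical
  rcases Nat.lt_or_ge n 2 with hn | hn
  · refine ⟨0, 0, 0, 0, fun i j hj => absurd ?_ hj⟩
    have h1 : (j : ℕ) = 0 := by omega
    have h2 : ((φ i : Fin n) : ℕ) = 0 := by omega
    exact Fin.ext (h1.trans h2.symm)
  -- the concatenated key-query points, pairwise distinct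
  set Z : Fin n × Fin n → Fin (d + d) → ℝ := fun p => Fin.append (h p.1) (h p.2) with hZ
  have hZinj : Function.Injective Z := by
    intro p p' hpp
    have h1 : h p.1 = h p'.1 := funext fun x => by
      have := congrFun hpp (Fin.castAdd d x)
      simpa only [hZ, Fin.append_left] using this
    have h2 : h p.2 = h p'.2 := funext fun x => by
      have := congrFun hpp (Fin.natAdd d x)
      simpa only [hZ, Fin.append_right] using this
    exact Prod.ext (hdist h1) (hdist h2)
  -- a separating linear functional
  obtain ⟨v, hv⟩ := exists_sep (d + d)
    ((Finset.univ.filter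
      (fun pq : (Fin n × Fin n) × (Fin n × Fin n) => pq.1 ≠ pq.2)).image
      (fun pq => Z pq.1 - Z pq.2))
    (by
      intro w hw
      obtain ⟨pq, hpq, rfl⟩ := Finset.mem_image.mp hw
      have hne : pq.1 ≠ pq.2 := (Finset.mem_filter.mp hpq).2
      exact sub_ne_zero.mpr fun hc => hne (hZinj hc))
  set s : Fin n × Fin n → ℝ := fun p => v ⬝ᵥ Z p with hs
  have hsinj : Function.Injective s := by
    intro p p' hpp
    by_contra hne
    refine hv (Z p - Z p') (Finset.mem_image.mpr ⟨(p, p'), ?_, rfl⟩) ?_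
    · exact Finset.mem_filter.mpr ⟨Finset.mem_univ _, hne⟩
    · rw [dotProduct_sub]
      simpa [hs] using sub_eq_zero.mpr hpp
  -- the minimal gap δ
  set D : Finset ℝ :=
    (Finset.univ.offDiag :
        Finset ((Fin n × Fin n) × (Fin n × Fin n))).image
      (fun pq => |s pq.1 - s pq.2|) with hD
  have hDne : D.Nonempty := by
    refine ⟨|s ((⟨0, by omega⟩, ⟨0, by omega⟩)) - s ((⟨1, by omega⟩, ⟨0, by omega⟩))|,
      Finset.mem_image.mpr ⟨((⟨0, by omega⟩, ⟨0, by omega⟩), (⟨1, by omega⟩, ⟨0, by omega⟩)),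
        Finset.mem_offDiag.mpr ⟨Finset.mem_univ _, Finset.mem_univ _, ?_⟩, rfl⟩⟩
    intro hc
    have := congrArg (fun p => (p.1 : Fin n).val) hc
    simp at this
  set δ : ℝ := D.min' hDne with hδdef
  have hδ : 0 < δ := by
    have hm := D.min'_mem hDne
    obtain ⟨pq, hpq, hval⟩ := Finset.mem_image.mp hm
    have hne : pq.1 ≠ pq.2 := (Finset.mem_offDiag.mp hpq).2.2
    have hpos : (0:ℝ) < |s pq.1 - s pq.2| :=
      abs_pos.mpr (sub_ne_zero.mpr fun hc => hne (hsinj hc))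
    rw [hval] at hpos
    exact hpos
  have hδle : ∀ p p' : Fin n × Fin n, p ≠ p' → δ ≤ |s p - s p'| := by
    intro p p' hne
    exact D.min'_le _ (Finset.mem_image.mpr
      ⟨(p, p'), Finset.mem_offDiag.mpr ⟨Finset.mem_univ _, Finset.mem_univ _, hne⟩, rfl⟩)
  -- the network
  set cen : Fin n → ℝ := fun i => s (i, φ i) with hcen
  refine ⟨6 * n,
    fun r : Fin (6*n) => ![(1:ℝ),-1,1,-1,1,-1] (finProdFinEquiv.symm r).1 • v,
    fun r => (fun i => ![δ - cen i, cen i - δ, -cen i, cen i, -δ - cen i, cen i + δ])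
      (finProdFinEquiv.symm r).2 (finProdFinEquiv.symm r).1,
    fun r => (fun t => ![(1:ℝ), c, -2, -2*c, 1, c] t / (δ*(1-c^2)))
      (finProdFinEquiv.symm r).1, ?_⟩
  have hscore : ∀ i j : Fin n,
      gatv2Score c
        (fun r : Fin (6*n) => ![(1:ℝ),-1,1,-1,1,-1] (finProdFinEquiv.symm r).1 • v)
        (fun r => (fun i => ![δ - cen i, cen i - δ, -cen i, cen i, -δ - cen i, cen i + δ])
          (finProdFinEquiv.symm r).2 (finProdFinEquiv.symm r).1)
        (fun r => (fun t => ![(1:ℝ), c, -2, -2*c, 1, c] t / (δ*(1-c^2)))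
          (finProdFinEquiv.symm r).1) (h i) (h j)
      = ∑ m : Fin n, tent δ (cen m) (s (i, j)) := by
    intro i j
    rw [gat_repr c v ![(1:ℝ),-1,1,-1,1,-1]
      (fun t => ![(1:ℝ), c, -2, -2*c, 1, c] t / (δ*(1-c^2)))
      (fun m => ![δ - cen m, cen m - δ, -cen m, cen m, -δ - cen m, cen m + δ]) (h i) (h j)]
    refine Finset.sum_congr rfl fun m _ => ?_
    have : v ⬝ᵥ Fin.append (h i) (h j) = s (i, j) := rfl
    rw [this]
    exact unit_sum c hc0 hc1 δ (cen m) (s (i, j)) hδ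
  intro i j hj
  rw [hscore i (φ i), hscore i j]
  have hupper : ∑ m : Fin n, tent δ (cen m) (s (i, j)) = 0 := by
    refine Finset.sum_eq_zero fun m _ => ?_
    refine tent_far δ (cen m) (s (i, j)) hδ ?_
    refine hδle (i, j) (m, φ m) ?_
    intro hc
    have h1 : i = m := congrArg Prod.fst hc
    have h2 : j = φ m := congrArg Prod.snd hc
    exact hj (h2.trans (congrArg φ h1.symm))
  have hlower : 1 ≤ ∑ m : Fin n, tent δ (cen m) (s (i, φ i)) := by
    have h1 : tent δ (cen i) (s (i, φ i)) = 1 := tent_self δ (cen i) hδ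
    calc (1:ℝ) = tent δ (cen i) (s (i, φ i)) := h1.symm
      _ ≤ ∑ m : Fin n, tent δ (cen m) (s (i, φ i)) :=
        Finset.single_le_sum (fun m _ => tent_nonneg δ (cen m) _ hδ) (Finset.mem_univ i)
  rw [hupper]
  linarith
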